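/- arXiv:1911.00166 — 2 statements merged into one kernel-verified Lean document; each statement's English description precedes it below -/
import Mathlib

section
/- Let r ≤ min(N,T), let R ∈ ℝ^{N×r} and S ∈ ℝ^{T×r} have orthonormal columns, and let P(W) := RR′W + WSS′ − RR′WSS′. Suppose Δ ∈ ℝ^{N×T} and c ≥ 0 satisfy the cone inequality ‖Δ‖_* ≤ 4‖P(Δ)‖_* + c. Then (1/(4√(3r)))·( ‖Δ‖_* − c ) ≤ ‖Δ‖_F ≤ ‖Δ‖_*; in particular, when c/‖Δ‖_* = o(1), the nuclear norm and the Frobenius norm of Δ are of the same order. (Equation (9): equivalence of nuclear and Frobenius norms on the restricted cone) -/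
open Matrix

noncomputable section

/-- Squared Frobenius norm. -/
def frobSq {N T : ℕ} (A : Matrix (Fin N) (Fin T) ℝ) : ℝ := ∑ i, ∑ t, (A i t) ^ 2

/-- Frobenius norm. -/
def frob {N T : ℕ} (A : Matrix (Fin N) (Fin T) ℝ) : ℝ := Real.sqrt (frobSq A)

/-- Nuclear norm: the sum of the singular values (the square roots of the
eigenvalues of `AᵀA`). -/
def nuclearNorm {N T : ℕ} (A : Matrix (Fin N) (Fin T) ℝ) : ℝ :=
  ∑ k, Real.sqrt ((Matrix.isHermitian_conjTranspose_mul_self A).eigenvalues k)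

/-- The map `P(W) = RR′W + WSS′ − RR′WSS′`. -/
def projPhi {N T r : ℕ} (R : Matrix (Fin N) (Fin r) ℝ) (S : Matrix (Fin T) (Fin r) ℝ)
    (W : Matrix (Fin N) (Fin T) ℝ) : Matrix (Fin N) (Fin T) ℝ :=
  R * Rᵀ * W + W * (S * Sᵀ) - R * Rᵀ * W * (S * Sᵀ)

-- frobSq as trace
lemma frobSq_eq_trace {N T : ℕ} (A : Matrix (Fin N) (Fin T) ℝ) :
    frobSq A = (Aᴴ * A).trace := by
  simp only [frobSq, Matrix.trace, Matrix.diag, Matrix.mul_apply, Matrix.conjTranspose_apply,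
    star_trivial, sq]
  exact Finset.sum_comm

-- trace of hermitian = sum of eigenvalues (ℝ case)
lemma trace_eq_sum_eigs {n : ℕ} {M : Matrix (Fin n) (Fin n) ℝ} (hM : M.IsHermitian) :
    M.trace = ∑ i, hM.eigenvalues i := by
  conv_lhs => rw [hM.spectral_theorem, Unitary.conjStarAlgAut_apply]
  rw [Matrix.trace_mul_cycle]
  rw [show (star (hM.eigenvectorUnitary : Matrix (Fin n) (Fin n) ℝ)) *
      (hM.eigenvectorUnitary : Matrix (Fin n) (Fin n) ℝ) = 1 from
    Unitary.coe_star_mul_self hM.eigenvectorUnitary, Matrix.one_mul]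
  simp [Matrix.trace_diagonal]

lemma sum_eigs_eq_frobSq {N T : ℕ} (A : Matrix (Fin N) (Fin T) ℝ) :
    ∑ k, (Matrix.isHermitian_conjTranspose_mul_self A).eigenvalues k = frobSq A := by
  rw [frobSq_eq_trace, trace_eq_sum_eigs (Matrix.isHermitian_conjTranspose_mul_self A)]

lemma frobSq_nonneg {N T : ℕ} (A : Matrix (Fin N) (Fin T) ℝ) : 0 ≤ frobSq A :=
  Finset.sum_nonneg fun _ _ => Finset.sum_nonneg fun _ _ => sq_nonneg _

lemma frob_nonneg {N T : ℕ} (A : Matrix (Fin N) (Fin T) ℝ) : 0 ≤ frob A := Real.sqrt_nonneg _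

lemma sqrt_sum_le_sum_sqrt' {ι : Type*} (s : Finset ι) (f : ι → ℝ) (h : ∀ i ∈ s, 0 ≤ f i) :
    Real.sqrt (∑ i ∈ s, f i) ≤ ∑ i ∈ s, Real.sqrt (f i) := by
  have key : ∑ i ∈ s, f i ≤ (∑ i ∈ s, Real.sqrt (f i)) ^ 2 := by
    rw [sq, Finset.sum_mul_sum]
    refine Finset.sum_le_sum fun i hi => ?_
    calc f i = Real.sqrt (f i) * Real.sqrt (f i) := (Real.mul_self_sqrt (h i hi)).symm
      _ ≤ ∑ j ∈ s, Real.sqrt (f i) * Real.sqrt (f j) := Finset.single_le_sum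
        (f := fun j => Real.sqrt (f i) * Real.sqrt (f j))
        (fun j _ => mul_nonneg (Real.sqrt_nonneg _) (Real.sqrt_nonneg _)) hi
  calc Real.sqrt (∑ i ∈ s, f i) ≤ Real.sqrt ((∑ i ∈ s, Real.sqrt (f i)) ^ 2) :=
        Real.sqrt_le_sqrt key
    _ = _ := Real.sqrt_sq (Finset.sum_nonneg fun i _ => Real.sqrt_nonneg _)

-- frob ≤ nuclear
lemma frob_le_nuclear {N T : ℕ} (A : Matrix (Fin N) (Fin T) ℝ) : frob A ≤ nuclearNorm A := by
  have h := fun k => Matrix.eigenvalues_conjTranspose_mul_self_nonneg A k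
  rw [frob, ← sum_eigs_eq_frobSq A]
  exact sqrt_sum_le_sum_sqrt' Finset.univ _ (fun i _ => h i)

-- nuclear ≤ sqrt(rank) * frob
lemma nuclear_le_sqrt_rank_mul_frob {N T : ℕ} (A : Matrix (Fin N) (Fin T) ℝ) :
    nuclearNorm A ≤ Real.sqrt A.rank * frob A := by
  classical
  set hH := Matrix.isHermitian_conjTranspose_mul_self A with hHdef
  set lam := hH.eigenvalues with hlam
  have hnn : ∀ k, 0 ≤ lam k := fun k => Matrix.eigenvalues_conjTranspose_mul_self_nonneg A k
  set s : Finset (Fin T) := Finset.univ.filter (fun k => lam k ≠ 0) with hs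
  have h1 : nuclearNorm A = ∑ k ∈ s, Real.sqrt (lam k) := by
    rw [nuclearNorm]
    refine (Finset.sum_filter_of_ne ?_).symm
    intro k _ hk
    intro h0
    exact hk (by show Real.sqrt (lam k) = 0; rw [h0, Real.sqrt_zero])
  have h2 : ∑ k ∈ s, Real.sqrt (lam k) = ∑ k ∈ s, Real.sqrt 1 * Real.sqrt (lam k) := by
    simp
  have h3 : ∑ k ∈ s, Real.sqrt 1 * Real.sqrt (lam k)
      ≤ Real.sqrt (∑ _k ∈ s, (1:ℝ)) * Real.sqrt (∑ k ∈ s, lam k) :=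
    Real.sum_sqrt_mul_sqrt_le s (fun _ => zero_le_one) (fun i => hnn i)
  have hcard : (∑ _k ∈ s, (1:ℝ)) = (A.rank : ℝ) := by
    rw [Finset.sum_const, nsmul_eq_mul, mul_one]
    congr 1
    rw [← Matrix.rank_conjTranspose_mul_self A, hH.rank_eq_card_non_zero_eigs,
      Fintype.card_subtype]
  have h4 : ∑ k ∈ s, lam k ≤ ∑ k, lam k :=
    Finset.sum_le_sum_of_subset_of_nonneg (Finset.filter_subset _ _) (fun i _ _ => hnn i)
  have h5 : Real.sqrt (∑ k ∈ s, lam k) ≤ frob A := by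
    rw [frob, ← sum_eigs_eq_frobSq A]
    exact Real.sqrt_le_sqrt h4
  calc nuclearNorm A = ∑ k ∈ s, Real.sqrt 1 * Real.sqrt (lam k) := by rw [h1, ← h2]
    _ ≤ Real.sqrt (∑ _k ∈ s, (1:ℝ)) * Real.sqrt (∑ k ∈ s, lam k) := h3
    _ ≤ Real.sqrt A.rank * frob A := by
        rw [hcard]
        exact mul_le_mul_of_nonneg_left h5 (Real.sqrt_nonneg _)

-- rank of sum
lemma matrix_rank_add_le {m n : ℕ} (A B : Matrix (Fin m) (Fin n) ℝ) :
    (A + B).rank ≤ A.rank + B.rank := by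
  have h : LinearMap.range (A + B).mulVecLin ≤
      LinearMap.range A.mulVecLin ⊔ LinearMap.range B.mulVecLin := by
    rw [Matrix.mulVecLin_add]
    rintro x ⟨y, rfl⟩
    exact Submodule.mem_sup.mpr ⟨A.mulVecLin y, ⟨y, rfl⟩, B.mulVecLin y, ⟨y, rfl⟩, rfl⟩
  exact le_trans (Submodule.finrank_mono h)
    (Submodule.finrank_add_le_finrank_add_finrank _ _)


lemma trace_inner_comm {N T : ℕ} (U V : Matrix (Fin N) (Fin T) ℝ) :
    (Uᴴ * V).trace = (Vᴴ * U).trace := by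
  simp only [Matrix.trace, Matrix.diag, Matrix.mul_apply, Matrix.conjTranspose_apply,
    star_trivial]
  exact Finset.sum_congr rfl fun i _ => Finset.sum_congr rfl fun j _ => mul_comm _ _

lemma frobSq_add' {N T : ℕ} (U V : Matrix (Fin N) (Fin T) ℝ) :
    frobSq (U + V) = frobSq U + frobSq V + 2 * (Uᴴ * V).trace := by
  simp only [frobSq_eq_trace, Matrix.conjTranspose_add, Matrix.add_mul, Matrix.mul_add,
    Matrix.trace_add]
  rw [trace_inner_comm V U]
  ring

lemma proj_orth {N T r : ℕ} (R : Matrix (Fin N) (Fin r) ℝ) (S : Matrix (Fin T) (Fin r) ℝ)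
    (hR : Rᵀ * R = 1) (hS : Sᵀ * S = 1) (X : Matrix (Fin N) (Fin T) ℝ) :
    frobSq (projPhi R S X) ≤ frobSq X := by
  set E : Matrix (Fin N) (Fin N) ℝ := 1 - R * Rᵀ with hE
  set F : Matrix (Fin T) (Fin T) ℝ := 1 - S * Sᵀ with hF
  have hRR : R * Rᵀ * (R * Rᵀ) = R * Rᵀ := by
    rw [Matrix.mul_assoc, ← Matrix.mul_assoc Rᵀ R Rᵀ, hR, Matrix.one_mul]
  have hSS : S * Sᵀ * (S * Sᵀ) = S * Sᵀ := by
    rw [Matrix.mul_assoc, ← Matrix.mul_assoc Sᵀ S Sᵀ, hS, Matrix.one_mul]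
  have hE2 : E * E = E := by
    simp only [hE, Matrix.mul_sub, Matrix.sub_mul, Matrix.one_mul, Matrix.mul_one, hRR]
    abel
  have hF2 : F * F = F := by
    simp only [hF, Matrix.mul_sub, Matrix.sub_mul, Matrix.one_mul, Matrix.mul_one, hSS]
    abel
  have hEt : Eᴴ = E := by
    simp [hE, Matrix.conjTranspose_sub, Matrix.conjTranspose_mul,
      Matrix.conjTranspose_eq_transpose_of_trivial, Matrix.transpose_transpose]
  have hFt : Fᴴ = F := by
    simp [hF, Matrix.conjTranspose_sub, Matrix.conjTranspose_mul,
      Matrix.conjTranspose_eq_transpose_of_trivial, Matrix.transpose_transpose]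
  set Q : Matrix (Fin N) (Fin T) ℝ := E * X * F with hQ
  have hPQ : projPhi R S X = X - Q := by
    simp only [projPhi, hQ, hE, hF, Matrix.mul_sub, Matrix.sub_mul, Matrix.one_mul,
      Matrix.mul_one]
    abel
  -- ⟨Q, Q⟩ = ⟨X, Q⟩
  have key : (Qᴴ * Q).trace = (Xᴴ * Q).trace := by
    have h1 : Qᴴ * Q = F * (Xᴴ * (E * (X * F))) := by
      simp only [hQ, Matrix.conjTranspose_mul, hEt, hFt, Matrix.mul_assoc]
      rw [← Matrix.mul_assoc E E (X * F), hE2]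
    have h2 : Xᴴ * Q = Xᴴ * (E * (X * F)) := by rw [hQ]; simp [Matrix.mul_assoc]
    rw [h1, h2]
    rw [Matrix.trace_mul_comm F (Xᴴ * (E * (X * F)))]
    simp only [Matrix.mul_assoc]
    rw [hF2]
  have horth : ((X - Q)ᴴ * Q).trace = 0 := by
    rw [Matrix.conjTranspose_sub, Matrix.sub_mul, Matrix.trace_sub, key]
    ring
  have hdecomp : X = (X - Q) + Q := by abel
  have : frobSq X = frobSq (X - Q) + frobSq Q := by
    conv_lhs => rw [hdecomp]
    rw [frobSq_add', horth]
    ring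
  rw [hPQ, this]
  have := frobSq_nonneg Q
  linarith

lemma rank_projPhi_le {N T r : ℕ} (R : Matrix (Fin N) (Fin r) ℝ) (S : Matrix (Fin T) (Fin r) ℝ)
    (X : Matrix (Fin N) (Fin T) ℝ) : (projPhi R S X).rank ≤ 2 * r := by
  have hsplit : projPhi R S X = R * (Rᵀ * X) + (X - R * Rᵀ * X) * (S * Sᵀ) := by
    simp only [projPhi, Matrix.sub_mul, Matrix.mul_assoc]
    abel
  rw [hsplit]
  refine le_trans (matrix_rank_add_le _ _) ?_
  have h1 : (R * (Rᵀ * X)).rank ≤ r :=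
    le_trans (Matrix.rank_mul_le_left _ _) (le_trans R.rank_le_card_width (by simp))
  have h2 : ((X - R * Rᵀ * X) * (S * Sᵀ)).rank ≤ r := by
    rw [← Matrix.mul_assoc]
    refine le_trans (Matrix.rank_mul_le_right _ _) ?_
    rw [Matrix.rank_transpose]
    exact le_trans S.rank_le_card_width (by simp)
  omega


/-- **Equation (9): equivalence of the nuclear and Frobenius norms on the
restricted cone.** If `R, S` have orthonormal columns and `‖Δ‖_* ≤ 4‖P(Δ)‖_* + c`
with `c ≥ 0`, then `(1/(4√(3r)))(‖Δ‖_* − c) ≤ ‖Δ‖_F ≤ ‖Δ‖_*`. -/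
theorem statement10 {N T r : ℕ} (hr : r ≤ min N T)
    (R : Matrix (Fin N) (Fin r) ℝ) (S : Matrix (Fin T) (Fin r) ℝ)
    (hR : Rᵀ * R = 1) (hS : Sᵀ * S = 1)
    (Δ : Matrix (Fin N) (Fin T) ℝ) (c : ℝ) (hc : 0 ≤ c)
    (hcone : nuclearNorm Δ ≤ 4 * nuclearNorm (projPhi R S Δ) + c) :
    (1 / (4 * Real.sqrt (3 * r))) * (nuclearNorm Δ - c) ≤ frob Δ
      ∧ frob Δ ≤ nuclearNorm Δ := by
  set P := projPhi R S Δ with hPdef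
  have hrankP : ((P.rank : ℝ)) ≤ 3 * (r : ℝ) := by
    have h := rank_projPhi_le R S Δ
    have : P.rank ≤ 3 * r := le_trans h (by omega)
    exact_mod_cast le_trans (Nat.cast_le.mpr this) (by push_cast; ring_nf; exact le_refl _)
  have h1 : nuclearNorm P ≤ Real.sqrt P.rank * frob P := nuclear_le_sqrt_rank_mul_frob P
  have h2 : Real.sqrt P.rank ≤ Real.sqrt (3 * (r : ℝ)) := Real.sqrt_le_sqrt hrankP
  have h3 : frob P ≤ frob Δ := Real.sqrt_le_sqrt (proj_orth R S hR hS Δ)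
  have hP1 : nuclearNorm P ≤ Real.sqrt (3 * (r : ℝ)) * frob Δ :=
    le_trans h1 (mul_le_mul h2 h3 (frob_nonneg P) (Real.sqrt_nonneg _))
  refine ⟨?_, frob_le_nuclear Δ⟩
  rcases le_or_gt (nuclearNorm Δ - c) 0 with h | h
  · exact le_trans (mul_nonpos_of_nonneg_of_nonpos (by positivity) h) (frob_nonneg Δ)
  · have hs : 0 < Real.sqrt (3 * (r : ℝ)) := by
      rcases Nat.eq_zero_or_pos r with hrz | hrz
      · exfalso
        subst hrz
        have h0 : Real.sqrt (3 * ((0 : ℕ) : ℝ)) = 0 := by norm_num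
        have hnP : nuclearNorm P ≤ 0 := by
          have := hP1
          rw [h0, zero_mul] at this
          exact this
        nlinarith [hcone, hnP]
      · apply Real.sqrt_pos.mpr
        have : (1 : ℝ) ≤ (r : ℝ) := by exact_mod_cast hrz
        nlinarith
    have hs4 : 0 < 4 * Real.sqrt (3 * (r : ℝ)) := by positivity
    rw [one_div, inv_mul_le_iff₀ hs4]
    have : nuclearNorm Δ - c ≤ 4 * nuclearNorm P := by linarith
    nlinarith [frob_nonneg Δ]


end
end

section
/- Let A, B ∈ ℝ^{N×T} satisfy A′B = 0 and AB′ = 0 (equivalently, the row spaces of A and B are orthogonal and the column spaces of A and B are orthogonal). Then the nuclear norm is additive: ‖A + B‖_* = ‖A‖_* + ‖B‖_*. -/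
open Matrix

noncomputable section

namespace Matrix.PosSemidef

open scoped MatrixOrder in
def sqrt {n : ℕ} {M : Matrix (Fin n) (Fin n) ℝ} (_hM : M.PosSemidef) :
    Matrix (Fin n) (Fin n) ℝ :=
  CFC.sqrt M

open scoped MatrixOrder in
lemma posSemidef_sqrt {n : ℕ} {M : Matrix (Fin n) (Fin n) ℝ} (hM : M.PosSemidef) :
    hM.sqrt.PosSemidef :=
  Matrix.nonneg_iff_posSemidef.mp (CFC.sqrt_nonneg M)

open scoped MatrixOrder in
lemma sqrt_mul_self {n : ℕ} {M : Matrix (Fin n) (Fin n) ℝ} (hM : M.PosSemidef) :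
    hM.sqrt * hM.sqrt = M :=
  CFC.sqrt_mul_sqrt_self M hM.nonneg

open scoped MatrixOrder in
lemma eq_sqrt_of_sq_eq {n : ℕ} {A B : Matrix (Fin n) (Fin n) ℝ} (hA : A.PosSemidef)
    (hB : B.PosSemidef) (hAB : A ^ 2 = B) : A = hB.sqrt :=
  (CFC.sqrt_unique (by rw [← hAB, pow_two]) hA.nonneg).symm

end Matrix.PosSemidef

private lemma sqrt_congr {n : ℕ} {M P : Matrix (Fin n) (Fin n) ℝ} (h : M = P)
    (hM : M.PosSemidef) (hP : P.PosSemidef) : hM.sqrt = hP.sqrt := by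
  subst h; rfl

open scoped MatrixOrder in
private lemma trace_sqrt {n : ℕ} {M : Matrix (Fin n) (Fin n) ℝ} (hM : M.PosSemidef) :
    hM.sqrt.trace = ∑ k, Real.sqrt (hM.1.eigenvalues k) := by
  rw [Matrix.PosSemidef.sqrt, CFC.sqrt_eq_real_sqrt M hM.nonneg, cfcₙ_eq_cfc,
    hM.1.cfc_eq, Matrix.IsHermitian.cfc, Unitary.conjStarAlgAut_apply, trace_mul_comm,
    ← Matrix.mul_assoc,
    (Matrix.mem_unitaryGroup_iff'.mp hM.1.eigenvectorUnitary.2), Matrix.one_mul,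
    trace_diagonal]
  simp

private lemma nuclear_eq_trace {N T : ℕ} (A : Matrix (Fin N) (Fin T) ℝ) :
    nuclearNorm A = (Matrix.posSemidef_conjTranspose_mul_self A).sqrt.trace := by
  rw [trace_sqrt]; rfl

/-- **Additivity of the nuclear norm under orthogonality.** If `A′B = 0` and
`AB′ = 0` (the row spaces of `A` and `B` are orthogonal and the column spaces of
`A` and `B` are orthogonal), then `‖A + B‖_* = ‖A‖_* + ‖B‖_*`. -/
theorem statement12 {N T : ℕ} (A B : Matrix (Fin N) (Fin T) ℝ)
    (h₁ : Aᵀ * B = 0) (h₂ : A * Bᵀ = 0) :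
    nuclearNorm (A + B) = nuclearNorm A + nuclearNorm B := by
  have hct : ∀ (M : Matrix (Fin N) (Fin T) ℝ), Mᴴ = Mᵀ := fun M =>
    Matrix.conjTranspose_eq_transpose_of_trivial M
  set P := Aᴴ * A with hPdef
  set Q := Bᴴ * B with hQdef
  have hP : P.PosSemidef := Matrix.posSemidef_conjTranspose_mul_self A
  have hQ : Q.PosSemidef := Matrix.posSemidef_conjTranspose_mul_self B
  have h₁' : Aᴴ * B = 0 := by rw [hct]; exact h₁
  have h₂' : A * Bᴴ = 0 := by rw [hct]; exact h₂
  have hBA : Bᴴ * A = 0 := by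
    have := congrArg Matrix.conjTranspose h₁'
    simpa [Matrix.conjTranspose_mul] using this
  have hPQ : P * Q = 0 := by
    rw [hPdef, hQdef, Matrix.mul_assoc, ← Matrix.mul_assoc A, h₂', Matrix.zero_mul,
      Matrix.mul_zero]
  have hsP := hP.posSemidef_sqrt
  have hsQ := hQ.posSemidef_sqrt
  have tP : Pᵀ = P := by
    rw [← Matrix.conjTranspose_eq_transpose_of_trivial]; exact hP.1.eq
  have tsP : hP.sqrtᵀ = hP.sqrt := by
    rw [← Matrix.conjTranspose_eq_transpose_of_trivial]; exact hsP.1.eq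
  have tsQ : hQ.sqrtᵀ = hQ.sqrt := by
    rw [← Matrix.conjTranspose_eq_transpose_of_trivial]; exact hsQ.1.eq
  -- P * sqrt Q = 0
  have hPsQ : P * hQ.sqrt = 0 := by
    have h0 : (P * hQ.sqrt) * (P * hQ.sqrt)ᴴ = 0 := by
      rw [Matrix.conjTranspose_mul, hsQ.1.eq, hP.1.eq, Matrix.mul_assoc,
        ← Matrix.mul_assoc hQ.sqrt, hQ.sqrt_mul_self, ← Matrix.mul_assoc, hPQ,
        Matrix.zero_mul]
    have := Matrix.conjTranspose_mul_self_eq_zero (A := (P * hQ.sqrt)ᴴ)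
    rw [Matrix.conjTranspose_conjTranspose] at this
    have h1 : (P * hQ.sqrt)ᴴ = 0 := this.mp h0
    calc P * hQ.sqrt = ((P * hQ.sqrt)ᴴ)ᴴ := by rw [Matrix.conjTranspose_conjTranspose]
    _ = 0 := by rw [h1, Matrix.conjTranspose_zero]
  have hsQP : hQ.sqrt * P = 0 := by
    have := congrArg Matrix.transpose hPsQ
    rwa [Matrix.transpose_mul, tsQ, tP, Matrix.transpose_zero] at this
  -- sqrt Q * sqrt P = 0
  have hsQsP : hQ.sqrt * hP.sqrt = 0 := by
    have h0 : (hQ.sqrt * hP.sqrt) * (hQ.sqrt * hP.sqrt)ᴴ = 0 := by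
      rw [Matrix.conjTranspose_mul, hsP.1.eq, hsQ.1.eq, Matrix.mul_assoc,
        ← Matrix.mul_assoc hP.sqrt, hP.sqrt_mul_self, ← Matrix.mul_assoc, Matrix.mul_assoc,
        ← Matrix.mul_assoc hQ.sqrt, hsQP, Matrix.zero_mul]
    have := Matrix.conjTranspose_mul_self_eq_zero (A := (hQ.sqrt * hP.sqrt)ᴴ)
    rw [Matrix.conjTranspose_conjTranspose] at this
    have h1 : (hQ.sqrt * hP.sqrt)ᴴ = 0 := this.mp h0
    calc hQ.sqrt * hP.sqrt = ((hQ.sqrt * hP.sqrt)ᴴ)ᴴ := by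
          rw [Matrix.conjTranspose_conjTranspose]
    _ = 0 := by rw [h1, Matrix.conjTranspose_zero]
  have hsPsQ : hP.sqrt * hQ.sqrt = 0 := by
    have := congrArg Matrix.transpose hsQsP
    rwa [Matrix.transpose_mul, tsQ, tsP, Matrix.transpose_zero] at this
  -- (sqrt P + sqrt Q)^2 = P + Q
  have hsum : (P + Q).PosSemidef := hP.add hQ
  have hsq : (hP.sqrt + hQ.sqrt) ^ 2 = P + Q := by
    rw [pow_two, Matrix.add_mul, Matrix.mul_add, Matrix.mul_add, hP.sqrt_mul_self,
      hQ.sqrt_mul_self, hsPsQ, hsQsP]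
    abel
  have hsqrt_sum : hsum.sqrt = hP.sqrt + hQ.sqrt :=
    ((hsP.add hsQ).eq_sqrt_of_sq_eq hsum hsq).symm
  -- (A+B)ᴴ(A+B) = P + Q
  have key : (A + B)ᴴ * (A + B) = P + Q := by
    rw [Matrix.conjTranspose_add, Matrix.add_mul, Matrix.mul_add, Matrix.mul_add,
      h₁', hBA]
    simp only [add_zero, zero_add]
    rfl
  rw [nuclear_eq_trace, nuclear_eq_trace, nuclear_eq_trace,
    sqrt_congr key (Matrix.posSemidef_conjTranspose_mul_self (A + B)) hsum,
    hsqrt_sum, Matrix.trace_add]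

end
end
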